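/- Let λ be an uncountable regular cardinal with λ^{<λ} = λ and let P be a non-atomic <λ-closed forcing of cardinality λ. Then P has a dense subset that, with the induced order, is order-isomorphic to Add*(λ,1); in particular, P is sub-equivalent to Add(λ,1). -/

import Mathlib

universe u v

noncomputable section

/-! ## Sequences of ordinals

`SeqLT o v` is the set `v^{<o}` of all sequences of ordinals `< v` of length `< o`
(for `o > 0`; values beyond the length are normalized to `0`).
`SeqFull o v` is the generalized Baire space `v^o` of all functions from ordinals `< o`
to ordinals `< v`. -/

/-- An element of `v^{<o}`: a sequence of ordinals `< v` of length `< o`. -/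
structure SeqLT (o v : Ordinal.{u}) : Type (u + 1) where
  len : Ordinal.{u}
  len_lt : len < o ⊔ 1
  val : Ordinal.{u} → Ordinal.{u}
  val_lt : ∀ β, β < len → val β < v
  val_zero : ∀ β, len ≤ β → val β = 0

namespace SeqLT

variable {o v : Ordinal.{u}}

/-- `s ⊆ t`, i.e. `t` end-extends `s`. -/
protected def le (s t : SeqLT o v) : Prop :=
  s.len ≤ t.len ∧ ∀ β, β < s.len → s.val β = t.val β

/-- `s ⊊ t`, i.e. `t` properly end-extends `s`. -/
protected def slt (s t : SeqLT o v) : Prop :=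
  s.le t ∧ s.len < t.len

/-- The empty sequence. -/
protected def empty (o v : Ordinal.{u}) : SeqLT o v where
  len := 0
  len_lt := lt_sup_iff.mpr (Or.inr zero_lt_one)
  val := fun _ => 0
  val_lt := fun β h => absurd h (not_lt_of_ge (zero_le (a := β)))
  val_zero := fun _ _ => rfl

/-- `s⌢⟨β⟩`: the sequence `s` extended by the single value `β`. -/
def snoc (s : SeqLT o v) (β : Ordinal.{u}) : SeqLT o v :=
  if h : s.len + 1 < o ⊔ 1 ∧ β < v then
    { len := s.len + 1
      len_lt := h.1
      val := fun γ => if γ = s.len then β else s.val γ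
      val_lt := fun γ hγ => by
        rcases eq_or_ne γ s.len with rfl | hne
        · simpa using h.2
        · simp only [if_neg hne]
          refine s.val_lt γ (lt_of_le_of_ne ?_ hne)
          rw [Ordinal.add_one_eq_succ] at hγ
          exact Order.lt_succ_iff.mp hγ
      val_zero := fun γ hγ => by
        have h1 : s.len < γ :=
          lt_of_lt_of_le (by rw [Ordinal.add_one_eq_succ]; exact Order.lt_succ s.len) hγ
        simp only [if_neg h1.ne']
        exact s.val_zero γ h1.le }
  else s

protected theorem le_refl (s : SeqLT o v) : s.le s :=
  ⟨le_rfl, fun _ _ => rfl⟩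

protected theorem le_trans {s t u : SeqLT o v} (h1 : s.le t) (h2 : t.le u) : s.le u :=
  ⟨h1.1.trans h2.1, fun β hβ => (h1.2 β hβ).trans (h2.2 β (lt_of_lt_of_le hβ h1.1))⟩

end SeqLT

/-- An element of the generalized Baire space `v^o`. -/
structure SeqFull (o v : Ordinal.{u}) : Type (u + 1) where
  val : Ordinal.{u} → Ordinal.{u}
  val_lt : ∀ β, β < o → val β < v
  val_zero : ∀ β, o ≤ β → val β = 0

/-- The restriction `x ↾ β` of `x : v^o` to an ordinal `β < o`. -/
def SeqFull.res {o v : Ordinal.{u}} (x : SeqFull o v) (β : Ordinal.{u}) : SeqLT o v :=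
  if h : β < o ⊔ 1 then
    { len := β
      len_lt := h
      val := fun γ => if γ < β then x.val γ else 0
      val_lt := fun γ hγ => by
        simp only [if_pos hγ]
        rcases lt_sup_iff.mp h with h' | h'
        · exact x.val_lt γ (hγ.trans h')
        · rw [Ordinal.lt_one_iff_zero] at h'
          exact absurd (h' ▸ hγ) (not_lt_of_ge (zero_le (a := γ)))
      val_zero := fun γ hγ => if_neg (not_lt.mpr hγ) }
  else SeqLT.empty o v

/-- `s ⊆ x`: the sequence `s` is an initial segment of `x : v^o`. -/
def SeqLT.prefixOf {o v : Ordinal.{u}} (s : SeqLT o v) (x : SeqFull o v) : Prop :=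
  ∀ β, β < s.len → s.val β = x.val β

/-! ## The bounded topology -/

/-- The basic open set `N_t`. -/
def basicOpen {o v : Ordinal.{u}} (t : SeqLT o v) : Set (SeqFull o v) :=
  {x | t.prefixOf x}

/-- The bounded (standard) topology on the generalized Baire space, generated by the
basic open sets `N_t`. -/
instance (o v : Ordinal.{u}) : TopologicalSpace (SeqFull o v) :=
  TopologicalSpace.generateFrom {U | ∃ t : SeqLT o v, U = basicOpen t}

/-- `A` is a nowhere dense subset of `B` (in the subspace topology on `B`). -/
def NowhereDenseIn {o v : Ordinal.{u}} (A B : Set (SeqFull o v)) : Prop :=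
  A ⊆ B ∧ interior (closure {x : ↥B | (x : SeqFull o v) ∈ A}) = ∅

/-- `A` is `o`-meager in `B`: `A ∩ B` is the union of (card of) `o` many nowhere dense
subsets of `B`. -/
def MeagerIn {o v : Ordinal.{u}} (A B : Set (SeqFull o v)) : Prop :=
  ∃ F : {β : Ordinal.{u} // β < o} → Set (SeqFull o v),
    (∀ i, NowhereDenseIn (F i) B) ∧ A ∩ B = ⋃ i, F i

/-- `A` is comeager in `B`: `B \ A` is meager in `B`. -/
def ComeagerIn {o v : Ordinal.{u}} (A B : Set (SeqFull o v)) : Prop :=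
  MeagerIn (B \ A) B

/-- `A` has the `o`-Baire property: for some open `U`, `A △ U` is meager. -/
def BaireSet {o v : Ordinal.{u}} (A : Set (SeqFull o v)) : Prop :=
  ∃ U : Set (SeqFull o v), IsOpen U ∧ MeagerIn (symmDiff A U) Set.univ

/-! ## Homomorphisms of `v^{<o}` -/

/-- A homomorphism: strictly extension-preserving map of `v^{<o}` to itself. -/
def IsHom {o v : Ordinal.{u}} (f : SeqLT o v → SeqLT o v) : Prop :=
  ∀ s t : SeqLT o v, s.slt t → (f s).slt (f t)

/-- `f` is dense: for every `s` and every `t ⊇ f(s)` there is `β < v` with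
`f(s⌢⟨β⟩) ⊇ t`. -/
def IsDenseMap {o v : Ordinal.{u}} (f : SeqLT o v → SeqLT o v) : Prop :=
  ∀ s t : SeqLT o v, (f s).le t → ∃ β, β < v ∧ t.le (f (s.snoc β))

/-- `u = ⋃_{α<γ} s α` for a chain `s`. -/
def IsUnionOfChain {o v : Ordinal.{u}} (u : SeqLT o v) (γ : Ordinal.{u})
    (s : Ordinal.{u} → SeqLT o v) : Prop :=
  (∀ α, α < γ → (s α).le u) ∧ ∀ β, β < u.len → ∃ α, α < γ ∧ β < (s α).len

/-- `f` is continuous: for every limit `γ < o` and every strictly increasing sequence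
`⟨s_α : α < γ⟩`, `f(⋃_{α<γ} s_α) = ⋃_{α<γ} f(s_α)`. -/
def IsContinuousMap {o v : Ordinal.{u}} (f : SeqLT o v → SeqLT o v) : Prop :=
  ∀ γ : Ordinal.{u}, Order.IsSuccLimit γ → γ < o →
    ∀ s : Ordinal.{u} → SeqLT o v, (∀ α β, α < β → β < γ → (s α).slt (s β)) →
      ∀ u : SeqLT o v, IsUnionOfChain u γ s → IsUnionOfChain (f u) γ fun α => f (s α)

/-- `y = f*(x) = ⋃_{α<o} f(x↾α)` for a homomorphism `f`. -/
def FStarVal {o v : Ordinal.{u}} (f : SeqLT o v → SeqLT o v) (x y : SeqFull o v) : Prop :=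
  (∀ α, α < o → (f (x.res α)).prefixOf y) ∧
    ∀ β, β < o → ∃ α, α < o ∧ β < (f (x.res α)).len

/-! ## Clubs and the almost Baire property -/

/-- `C` is a club (closed unbounded set) in the ordinal `o`. -/
def IsClubIn (C : Set Ordinal.{u}) (o : Ordinal.{u}) : Prop :=
  (∀ γ ∈ C, γ < o) ∧ (∀ β, β < o → ∃ γ ∈ C, β ≤ γ) ∧
    ∀ β, β < o → 0 < β → (∀ γ, γ < β → ∃ ξ ∈ C, γ < ξ ∧ ξ < β) → β ∈ C

/-- The set of functions coding elements of the club filter as characteristic functions. -/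
def ClSet (o v : Ordinal.{u}) : Set (SeqFull o v) :=
  {x | ∃ C : Set Ordinal.{u}, IsClubIn C o ∧ ∀ i ∈ C, x.val i ≠ 0}

/-- The set of functions coding elements of the nonstationary ideal. -/
def NsSet (o v : Ordinal.{u}) : Set (SeqFull o v) :=
  {x | ∃ C : Set Ordinal.{u}, IsClubIn C o ∧ ∀ i ∈ C, x.val i = 0}

/-- `A` is almost Baire: there is a dense homomorphism `f` with `ran f* ⊆ A`, or a dense
continuous homomorphism `f` with `f ∅ = ∅` and `ran f* ⊆ Aᶜ`. -/
def AlmostBaire {o v : Ordinal.{u}} (A : Set (SeqFull o v)) : Prop :=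
  ∃ f : SeqLT o v → SeqLT o v, IsHom f ∧ IsDenseMap f ∧
    ((∀ x y, FStarVal f x y → y ∈ A) ∨
      ((∀ x y, FStarVal f x y → y ∉ A) ∧ IsContinuousMap f ∧
        f (SeqLT.empty o v) = SeqLT.empty o v))

/-! ## Banach–Mazur games of length `o`

A run of the game is a strictly increasing sequence `⟨s_α : α < o⟩` in `v^{<o}`;
player I plays at even positions (`0` and limits count as even), player II at odd ones.
In the game `G^t` the first move of player I must extend `t`; taking `t = ∅` gives the
plain Banach–Mazur game. -/

/-- `γ` is an even ordinal (`0` and limits are even). -/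
def EvenOrd (γ : Ordinal.{u}) : Prop := ∃ δ : Ordinal.{u}, γ = 2 * δ

/-- `γ` is an odd ordinal. -/
def OddOrd (γ : Ordinal.{u}) : Prop := ∃ δ : Ordinal.{u}, γ = 2 * δ + 1

/-- The moves of a (partial) run, as a function on ordinals. -/
abbrev Play (o v : Ordinal.{u}) := Ordinal.{u} → SeqLT o v

/-- A strategy: given the length of the current position and the moves so far,
produce the next move. -/
abbrev Strat (o v : Ordinal.{u}) := Ordinal.{u} → Play o v → SeqLT o v

/-- `p` is a legal partial run of length `γ` of the game `G^t`: strictly increasing moves,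
the first move extends `t`, and the moves beyond `γ` are normalized to `∅`. -/
def IsPos {o v : Ordinal.{u}} (t : SeqLT o v) (p : Play o v) (γ : Ordinal.{u}) : Prop :=
  (∀ α β, α < β → β < γ → (p α).slt (p β)) ∧ (0 < γ → t.le (p 0)) ∧
    ∀ α, γ ≤ α → p α = SeqLT.empty o v

/-- The restriction of a run to its first `γ` moves. -/
def resPlay {o v : Ordinal.{u}} (p : Play o v) (γ : Ordinal.{u}) : Play o v :=
  fun α => if α < γ then p α else SeqLT.empty o v

/-- `m` is a legal move at the position `p` of length `γ` in the game `G^t`. -/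
def MoveOK {o v : Ordinal.{u}} (t : SeqLT o v) (p : Play o v) (γ : Ordinal.{u})
    (m : SeqLT o v) : Prop :=
  (∀ α, α < γ → (p α).slt m) ∧ (γ = 0 → t.le m)

/-- `σ` is a strategy for player I in `G^t`: it assigns a legal move to every legal
position of even length. -/
def LegalI {o v : Ordinal.{u}} (t : SeqLT o v) (σ : Strat o v) : Prop :=
  ∀ γ, γ < o → EvenOrd γ → ∀ p, IsPos t p γ → MoveOK t p γ (σ γ p)

/-- `σ` is a strategy for player II in `G^t`: it assigns a legal move to every legal
position of odd length. -/
def LegalII {o v : Ordinal.{u}} (t : SeqLT o v) (σ : Strat o v) : Prop :=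
  ∀ γ, γ < o → OddOrd γ → ∀ p, IsPos t p γ → MoveOK t p γ (σ γ p)

/-- The first `γ` moves of `p` follow the strategy `σ` of player I. -/
def FollowsI {o v : Ordinal.{u}} (σ : Strat o v) (p : Play o v) (γ : Ordinal.{u}) : Prop :=
  ∀ α, α < γ → EvenOrd α → p α = σ α (resPlay p α)

/-- The first `γ` moves of `p` follow the strategy `σ` of player II. -/
def FollowsII {o v : Ordinal.{u}} (σ : Strat o v) (p : Play o v) (γ : Ordinal.{u}) : Prop :=
  ∀ α, α < γ → OddOrd α → p α = σ α (resPlay p α)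

/-- `x = ⋃_{α<o} p α` is the outcome of the complete run `p`. -/
def IsOutcome {o v : Ordinal.{u}} (p : Play o v) (x : SeqFull o v) : Prop :=
  (∀ α, α < o → (p α).prefixOf x) ∧ ∀ β, β < o → ∃ α, α < o ∧ β < (p α).len

/-- Player I has a winning strategy in the Banach–Mazur game `G^t(A)` of length `o`. -/
def WinIStrat {o v : Ordinal.{u}} (t : SeqLT o v) (A : Set (SeqFull o v)) : Prop :=
  ∃ σ : Strat o v, LegalI t σ ∧
    ∀ p : Play o v, IsPos t p o → FollowsI σ p o → ∃ x, IsOutcome p x ∧ x ∈ A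

/-- Player II has a winning strategy in the Banach–Mazur game `G^t(A)` of length `o`. -/
def WinIIStrat {o v : Ordinal.{u}} (t : SeqLT o v) (A : Set (SeqFull o v)) : Prop :=
  ∃ σ : Strat o v, LegalII t σ ∧
    ∀ p : Play o v, IsPos t p o → FollowsII σ p o → ∃ x, IsOutcome p x ∧ x ∉ A

/-- `σ` is a tactic for player II: its moves depend only on the union of the previous moves. -/
def IsTacticII {o v : Ordinal.{u}} (t : SeqLT o v) (σ : Strat o v) : Prop :=
  ∃ f : SeqLT o v → SeqLT o v, ∀ γ, γ < o → OddOrd γ → ∀ p, IsPos t p γ →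
    ∀ u, IsUnionOfChain u γ p → σ γ p = f u

/-- Player II has a winning tactic in the Banach–Mazur game `G^t(A)` of length `o`. -/
def WinIITactic {o v : Ordinal.{u}} (t : SeqLT o v) (A : Set (SeqFull o v)) : Prop :=
  ∃ σ : Strat o v, LegalII t σ ∧ IsTacticII t σ ∧
    ∀ p : Play o v, IsPos t p o → FollowsII σ p o → ∃ x, IsOutcome p x ∧ x ∉ A

/-! ## Trees and perfect sets -/

/-- A subtree of `v^{<o}`: a downwards closed set of sequences. -/
def IsSubtree {o v : Ordinal.{u}} (T : Set (SeqLT o v)) : Prop :=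
  ∀ s ∈ T, ∀ r : SeqLT o v, r.le s → r ∈ T

/-- `T` is closed: every strictly increasing sequence in `T` of length `< o` has an
upper bound in `T`. -/
def TreeClosed {o v : Ordinal.{u}} (T : Set (SeqLT o v)) : Prop :=
  ∀ γ : Ordinal.{u}, γ < o → ∀ s : Ordinal.{u} → SeqLT o v,
    (∀ α β, α < β → β < γ → (s α).slt (s β)) → (∀ α, α < γ → s α ∈ T) →
      ∃ b ∈ T, ∀ α, α < γ → (s α).le b

/-- `t` is a direct successor of `s`. -/
def IsDirectSucc {o v : Ordinal.{u}} (s t : SeqLT o v) : Prop :=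
  s.slt t ∧ t.len = s.len + 1

/-- `T` is a perfect tree: a (nonempty) closed subtree whose splitting nodes are cofinal. -/
def IsPerfectTree {o v : Ordinal.{u}} (T : Set (SeqLT o v)) : Prop :=
  T.Nonempty ∧ IsSubtree T ∧ TreeClosed T ∧
    ∀ s ∈ T, ∃ t ∈ T, s.le t ∧
      ∃ t₁ ∈ T, ∃ t₂ ∈ T, IsDirectSucc t t₁ ∧ IsDirectSucc t t₂ ∧ t₁ ≠ t₂

/-- The body `[T]` of a tree `T`: the set of branches of length `o` through `T`. -/
def treeBody {o v : Ordinal.{u}} (T : Set (SeqLT o v)) : Set (SeqFull o v) :=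
  {x | ∀ α, α < o → x.res α ∈ T}

/-- The forcing `Add(λ,1)`: sequences in `λ^{<λ}` ordered by reverse inclusion. -/
instance (o w : Ordinal.{u}) : Preorder (SeqLT o w) where
  le p q := SeqLT.le q p
  le_refl p := SeqLT.le_refl p
  le_trans p q r h1 h2 := SeqLT.le_trans h2 h1

/-- A subset `D` of a forcing (preorder) is dense if every condition has an extension in `D`. -/
def DenseSub {P : Type v} [Preorder P] (D : Set P) : Prop :=
  ∀ p : P, ∃ d ∈ D, d ≤ p

/-- A sub-isomorphism `ι : P → Q` is an order isomorphism of `P` onto a dense subset of `Q`. -/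
structure IsSubIso {P Q : Type v} [Preorder P] [Preorder Q] (ι : P → Q) : Prop where
  inj : Function.Injective ι
  le_iff : ∀ p p' : P, p ≤ p' ↔ ι p ≤ ι p'
  dense : DenseSub (Set.range ι)

/-- `P` and `Q` are sub-equivalent if there are a forcing `R` and sub-isomorphisms
`R → P` and `R → Q`. -/
def SubEquiv (P Q : Type v) [Preorder P] [Preorder Q] : Prop :=
  ∃ (R : Type v) (instR : Preorder R) (f : R → P) (g : R → Q),
    @IsSubIso R P instR _ f ∧ @IsSubIso R Q instR _ g

/-! ## Auxiliary development for `statement3` -/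

namespace S3

/-- Two conditions are compatible. -/
def Compat {P : Type (u + 1)} [Preorder P] (p q : P) : Prop := ∃ w : P, w ≤ p ∧ w ≤ q

open Classical in
/-- Choose an element satisfying `Q`, or a default. -/
noncomputable def dchoice {α : Sort*} (dflt : α) (Q : α → Prop) : α :=
  if h : ∃ x, Q x then h.choose else dflt

theorem dchoice_spec {α : Sort*} (dflt : α) {Q : α → Prop} (h : ∃ x, Q x) :
    Q (dchoice dflt Q) := by
  unfold dchoice
  rw [dif_pos h]
  exact h.choose_spec

/-- Data for the construction: an enumeration, closure, and a splitting function. -/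
structure Setup (l : Cardinal.{u}) (P : Type (u + 1)) [Preorder P] : Type (u + 1) where
  dflt : P
  enum : Ordinal.{u} → P
  enum_surj : ∀ p : P, ∃ β : Ordinal.{u}, β < l.ord ∧ enum β = p
  closed : ∀ γ : Ordinal.{u}, γ < l.ord → ∀ f : Ordinal.{u} → P,
      (∀ α β : Ordinal.{u}, α ≤ β → β < γ → f β ≤ f α) → ∃ b : P, ∀ α, α < γ → b ≤ f α
  spl : P → P × P
  spl1_le : ∀ p, (spl p).1 ≤ p
  spl2_le : ∀ p, (spl p).2 ≤ p
  spl_inc : ∀ p, ¬ Compat (spl p).1 (spl p).2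
  lim : Order.IsSuccLimit l.ord

variable {l : Cardinal.{u}} {P : Type (u + 1)} [Preorder P]

theorem Compat.symm {p q : P} (h : Compat p q) : Compat q p := by
  obtain ⟨w, h1, h2⟩ := h; exact ⟨w, h2, h1⟩

theorem compat_mono {p p' q : P} (h : p ≤ p') (hc : Compat p q) : Compat p' q := by
  obtain ⟨w, h1, h2⟩ := hc; exact ⟨w, h1.trans h, h2⟩

theorem compat_of_le {p q : P} (h : p ≤ q) : Compat q p := ⟨p, h, le_rfl⟩

theorem lt_add_one_iff' {x y : Ordinal.{u}} : x < y + 1 ↔ x ≤ y := by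
  rw [Ordinal.add_one_eq_succ]; exact Order.lt_succ_iff

theorem succ_lt_lim {x : Ordinal.{u}} (h : x < l.ord) (hl : Order.IsSuccLimit l.ord) :
    x + 1 < l.ord := by
  rw [Ordinal.add_one_eq_succ]; exact hl.succ_lt h

open Classical in
/-- A common extension (if compatible), else the first argument. -/
noncomputable def cext (p q : P) : P := if h : Compat p q then h.choose else p

theorem cext_le_left (p q : P) : cext p q ≤ p := by
  unfold cext
  split
  · next h => exact h.choose_spec.1
  · exact le_rfl

theorem cext_le_right {p q : P} (h : Compat p q) : cext p q ≤ q := by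
  unfold cext
  rw [dif_pos h]
  exact h.choose_spec.2

theorem cext_dec (p q : P) : cext p q ≤ q ∨ ¬ Compat (cext p q) q := by
  by_cases h : Compat p q
  · exact Or.inl (cext_le_right h)
  · refine Or.inr fun hc => h ?_
    exact compat_mono (cext_le_left p q) hc

/-! ### Deciding extensions -/

/-- One step of the sequence of extensions of `p` deciding the enumerated conditions. -/
noncomputable def decSeqStep (S : Setup l P) (p : P) (ξ : Ordinal.{u})
    (prev : ∀ η : Ordinal.{u}, η < ξ → P) : P :=
  cext (dchoice p fun b : P => b ≤ p ∧ ∀ η : Ordinal.{u}, ∀ hη : η < ξ, b ≤ prev η hη)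
    (S.enum ξ)

noncomputable def decSeq (S : Setup l P) (p : P) : Ordinal.{u} → P :=
  Ordinal.lt_wf.fix (decSeqStep S p)

theorem decSeq_eq (S : Setup l P) (p : P) (ξ : Ordinal.{u}) :
    decSeq S p ξ = decSeqStep S p ξ fun η _ => decSeq S p η :=
  WellFounded.fix_eq _ _ _

theorem decSeq_inv (S : Setup l P) (p : P) : ∀ ξ : Ordinal.{u}, ξ < l.ord →
    decSeq S p ξ ≤ p ∧ ∀ η : Ordinal.{u}, η < ξ → decSeq S p ξ ≤ decSeq S p η := by
  intro ξ
  induction ξ using Ordinal.induction with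
  | h ξ IH =>
    intro hξ
    have hex : ∃ b : P, b ≤ p ∧ ∀ η : Ordinal.{u}, ∀ _ : η < ξ, b ≤ decSeq S p η := by
      rcases Ordinal.zero_or_succ_or_isSuccLimit ξ with h0 | ⟨a, ha⟩ | hlim
      · subst h0
        exact ⟨p, le_rfl, fun η hη => absurd hη (not_lt_of_ge (zero_le (a := η)))⟩
      · subst ha
        have haξ : a < Order.succ a := Order.lt_succ a
        have ha' := IH a haξ (haξ.trans hξ)
        refine ⟨decSeq S p a, ha'.1, fun η hη => ?_⟩
        rcases (Order.lt_succ_iff.mp hη).lt_or_eq with h | h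
        · exact ha'.2 η h
        · subst h; exact le_rfl
      · obtain ⟨b, hb⟩ := S.closed ξ hξ (fun η => decSeq S p η) (fun x y hxy hy => by
          rcases hxy.lt_or_eq with h | h
          · exact (IH y hy (hy.trans hξ)).2 x h
          · subst h; exact le_rfl)
        exact ⟨b, (hb 0 hlim.pos).trans (IH 0 hlim.pos (hlim.pos.trans hξ)).1,
          fun η hη => hb η hη⟩
    have hmem := dchoice_spec (α := P) p hex
    constructor
    · rw [decSeq_eq, decSeqStep]
      exact (cext_le_left _ _).trans hmem.1
    · intro η hη
      rw [decSeq_eq, decSeqStep]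
      exact (cext_le_left _ _).trans (hmem.2 η hη)

theorem decSeq_dec (S : Setup l P) (p : P) (ξ : Ordinal.{u}) :
    decSeq S p ξ ≤ S.enum ξ ∨ ¬ Compat (decSeq S p ξ) (S.enum ξ) := by
  rw [decSeq_eq, decSeqStep]
  exact cext_dec _ _

/-- An extension of `p` deciding `S.enum ξ` for every `ξ < δ`. -/
noncomputable def decideExt (S : Setup l P) (δ : Ordinal.{u}) (p : P) : P :=
  dchoice p fun b : P => b ≤ p ∧ ∀ ξ : Ordinal.{u}, ξ < δ → b ≤ decSeq S p ξ

theorem decideExt_spec (S : Setup l P) {δ : Ordinal.{u}} (hδ : δ < l.ord) (p : P) :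
    decideExt S δ p ≤ p ∧ ∀ ξ : Ordinal.{u}, ξ < δ →
      (decideExt S δ p ≤ S.enum ξ ∨ ¬ Compat (decideExt S δ p) (S.enum ξ)) := by
  have hex : ∃ b : P, b ≤ p ∧ ∀ ξ : Ordinal.{u}, ξ < δ → b ≤ decSeq S p ξ := by
    rcases Ordinal.zero_or_succ_or_isSuccLimit δ with h0 | ⟨a, ha⟩ | hlim
    · subst h0
      exact ⟨p, le_rfl, fun η hη => absurd hη (not_lt_of_ge (zero_le (a := η)))⟩
    · subst ha
      have haδ : a < Order.succ a := Order.lt_succ a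
      have ha' := decSeq_inv S p a (haδ.trans hδ)
      refine ⟨decSeq S p a, ha'.1, fun η hη => ?_⟩
      rcases (Order.lt_succ_iff.mp hη).lt_or_eq with h | h
      · exact ha'.2 η h
      · subst h; exact le_rfl
    · obtain ⟨b, hb⟩ := S.closed δ hδ (fun η => decSeq S p η) (fun x y hxy hy => by
        rcases hxy.lt_or_eq with h | h
        · exact (decSeq_inv S p y (hy.trans hδ)).2 x h
        · subst h; exact le_rfl)
      exact ⟨b, (hb 0 hlim.pos).trans (decSeq_inv S p 0 (hlim.pos.trans hδ)).1,
        fun η hη => hb η hη⟩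
  have hmem := dchoice_spec (α := P) p hex
  refine ⟨hmem.1, fun ξ hξ => ?_⟩
  rcases decSeq_dec S p ξ with h | h
  · exact Or.inl ((hmem.2 ξ hξ).trans h)
  · exact Or.inr fun hc => h (compat_mono (hmem.2 ξ hξ) hc)

/-! ### The maximal antichain family -/

open Classical in
/-- The core case analysis producing the next antichain element and the new reservoir. -/
noncomputable def cfamCore (S : Setup l P) (pδ : Ordinal.{u}) (r e : P) (b2 : Prop) : P × P :=
  if Compat r e then
    (decideExt S pδ (S.spl (cext r e)).1, (S.spl (cext r e)).2)
  else if b2 then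
    (decideExt S pδ r, e)
  else
    (decideExt S pδ (S.spl e).1, (S.spl e).2)

theorem cfamCore_spec (S : Setup l P) {pδ : Ordinal.{u}} (hpδ : pδ < l.ord) (r e : P)
    (b2 : Prop) :
    ((cfamCore S pδ r e b2).1 ≤ e ∨ ((cfamCore S pδ r e b2).1 ≤ r ∧ b2)) ∧
    (cfamCore S pδ r e b2).2 ≤ e ∧
    ¬ Compat (cfamCore S pδ r e b2).2 (cfamCore S pδ r e b2).1 ∧
    (Compat r (cfamCore S pδ r e b2).1 ∨ ¬ b2) ∧
    (∀ ξ : Ordinal.{u}, ξ < pδ →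
      ((cfamCore S pδ r e b2).1 ≤ S.enum ξ ∨ ¬ Compat ((cfamCore S pδ r e b2).1) (S.enum ξ))) := by
  classical
  unfold cfamCore
  split
  · next h1 =>
    have hd := decideExt_spec S hpδ (S.spl (cext r e)).1
    have hc1 : decideExt S pδ (S.spl (cext r e)).1 ≤ cext r e :=
      hd.1.trans (S.spl1_le _)
    refine ⟨Or.inl (hc1.trans (cext_le_right h1)), (S.spl2_le _).trans (cext_le_right h1),
      ?_, Or.inl ⟨_, hc1.trans (cext_le_left r e), le_rfl⟩, hd.2⟩
    intro hcc
    exact S.spl_inc (cext r e) (compat_mono hd.1 hcc.symm)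
  · next h1 =>
    split
    · next h2 =>
      have hd := decideExt_spec S hpδ r
      refine ⟨Or.inr ⟨hd.1, h2⟩, le_rfl, ?_, Or.inl ⟨_, hd.1, le_rfl⟩, hd.2⟩
      intro hcc
      obtain ⟨w, hw1, hw2⟩ := hcc
      exact h1 ⟨w, hw2.trans hd.1, hw1⟩
    · next h2 =>
      have hd := decideExt_spec S hpδ (S.spl e).1
      refine ⟨Or.inl (hd.1.trans (S.spl1_le _)), S.spl2_le _, ?_, Or.inr h2, hd.2⟩
      intro hcc
      exact S.spl_inc e (compat_mono hd.1 hcc.symm)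

open Classical in
noncomputable def cfamStep (S : Setup l P) (L : Set P) (pδ : Ordinal.{u}) (β : Ordinal.{u})
    (prev : ∀ η : Ordinal.{u}, η < β → P × P) : P × P :=
  cfamCore S pδ
    (if S.enum β ∈ L then S.enum β
     else dchoice S.dflt fun e : P => e ∈ L ∧ ∀ η : Ordinal.{u}, ∀ hη : η < β, e ≤ (prev η hη).2)
    (dchoice S.dflt fun e : P => e ∈ L ∧ ∀ η : Ordinal.{u}, ∀ hη : η < β, e ≤ (prev η hη).2)
    (∀ η : Ordinal.{u}, ∀ hη : η < β, ¬ Compat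
      (if S.enum β ∈ L then S.enum β
       else dchoice S.dflt fun e : P => e ∈ L ∧ ∀ η : Ordinal.{u}, ∀ hη : η < β, e ≤ (prev η hη).2)
      (prev η hη).1)

noncomputable def cfam (S : Setup l P) (L : Set P) (pδ : Ordinal.{u}) : Ordinal.{u} → P × P :=
  Ordinal.lt_wf.fix (cfamStep S L pδ)

theorem cfam_eq (S : Setup l P) (L : Set P) (pδ : Ordinal.{u}) (β : Ordinal.{u}) :
    cfam S L pδ β = cfamStep S L pδ β fun η _ => cfam S L pδ η :=
  WellFounded.fix_eq _ _ _

/-- The invariant of the antichain family. -/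
def CfamInv (S : Setup l P) (L : Set P) (pδ : Ordinal.{u}) (β : Ordinal.{u}) : Prop :=
  (cfam S L pδ β).1 ∈ L ∧ (cfam S L pδ β).2 ∈ L ∧
  (∀ η, η < β → (cfam S L pδ β).2 ≤ (cfam S L pδ η).2) ∧
  (∀ η, η < β → ¬ Compat (cfam S L pδ β).1 (cfam S L pδ η).1) ∧
  ¬ Compat (cfam S L pδ β).2 (cfam S L pδ β).1 ∧
  (S.enum β ∈ L → ∃ η, η ≤ β ∧ Compat (S.enum β) (cfam S L pδ η).1) ∧
  (∀ ξ : Ordinal.{u}, ξ < pδ →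
    ((cfam S L pδ β).1 ≤ S.enum ξ ∨ ¬ Compat ((cfam S L pδ β).1) (S.enum ξ)))

theorem cfam_inv (S : Setup l P) (L : Set P) (hL : ∀ x ∈ L, ∀ y : P, y ≤ x → y ∈ L)
    (hne : L.Nonempty) {pδ : Ordinal.{u}} (hpδ : pδ < l.ord) :
    ∀ β : Ordinal.{u}, β < l.ord → CfamInv S L pδ β := by
  intro β
  induction β using Ordinal.induction with
  | h β IH =>
    intro hβ
    classical
    have hex : ∃ e : P, e ∈ L ∧ ∀ η : Ordinal.{u}, ∀ _ : η < β, e ≤ (cfam S L pδ η).2 := by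
      rcases Ordinal.zero_or_succ_or_isSuccLimit β with h0 | ⟨a, ha⟩ | hlim
      · subst h0
        obtain ⟨x, hx⟩ := hne
        exact ⟨x, hx, fun η hη => absurd hη (not_lt_of_ge (zero_le (a := η)))⟩
      · subst ha
        have haβ : a < Order.succ a := Order.lt_succ a
        have ha' := IH a haβ (haβ.trans hβ)
        refine ⟨(cfam S L pδ a).2, ha'.2.1, fun η hη => ?_⟩
        rcases (Order.lt_succ_iff.mp hη).lt_or_eq with h | h
        · exact ha'.2.2.1 η h
        · subst h; exact le_rfl
      · obtain ⟨b, hb⟩ := S.closed β hβ (fun η => (cfam S L pδ η).2) (fun x y hxy hy => by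
          rcases hxy.lt_or_eq with h | h
          · exact (IH y hy (hy.trans hβ)).2.2.1 x h
          · subst h; exact le_rfl)
        exact ⟨b, hL _ (IH 0 hlim.pos (hlim.pos.trans hβ)).2.1 b (hb 0 hlim.pos),
          fun η hη => hb η hη⟩
    set E : P := dchoice S.dflt
      (fun e : P => e ∈ L ∧ ∀ η : Ordinal.{u}, ∀ hη : η < β, e ≤ (cfam S L pδ η).2) with hE
    have hEspec := dchoice_spec (α := P) S.dflt hex
    rw [← hE] at hEspec
    set R : P := if S.enum β ∈ L then S.enum β else E with hR
    have hRL : R ∈ L := by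
      rw [hR]; split
      · next h => exact h
      · exact hEspec.1
    set B2 : Prop := ∀ η : Ordinal.{u}, ∀ hη : η < β, ¬ Compat R (cfam S L pδ η).1 with hB2
    have hceq : cfam S L pδ β = cfamCore S pδ R E B2 := by
      rw [cfam_eq, cfamStep]
    have hcore := cfamCore_spec S hpδ R E B2
    set c := cfamCore S pδ R E B2 with hc
    have hc1L : c.1 ∈ L := by
      rcases hcore.1 with h | h
      · exact hL _ hEspec.1 _ h
      · exact hL _ hRL _ h.1
    constructor
    · rw [hceq]; exact hc1L
    constructor
    · rw [hceq]; exact hL _ hEspec.1 _ hcore.2.1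
    constructor
    · intro η hη
      rw [hceq]
      exact hcore.2.1.trans (hEspec.2 η hη)
    constructor
    · intro η hη
      rw [hceq]
      rcases hcore.1 with h | h
      · intro hcc
        have h2 : c.1 ≤ (cfam S L pδ η).2 := h.trans (hEspec.2 η hη)
        exact (IH η hη (hη.trans hβ)).2.2.2.2.1 (compat_mono h2 hcc)
      · intro hcc
        exact h.2 η hη (compat_mono h.1 hcc)
    constructor
    · rw [hceq]; exact hcore.2.2.1
    constructor
    · intro henum
      have hRe : R = S.enum β := by rw [hR, if_pos henum]
      rcases hcore.2.2.2.1 with h | h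
      · exact ⟨β, le_rfl, by rw [hceq, ← hRe]; exact h⟩
      · rw [hB2] at h
        push_neg at h
        obtain ⟨η, hη, hcomp⟩ := h
        exact ⟨η, hη.le, by rw [← hRe]; exact hcomp⟩
    · intro ξ hξ
      rw [hceq]
      exact hcore.2.2.2.2 ξ hξ

/-! ### The tree of conditions -/

noncomputable def nodePStep (S : Setup l P) (δ : Ordinal.{u})
    (prev : ∀ α : Ordinal.{u}, α < δ → (Ordinal.{u} → Ordinal.{u}) → P)
    (f : Ordinal.{u} → Ordinal.{u}) : P :=
  (cfam S {r : P | ∀ α : Ordinal.{u}, ∀ hα : α < δ, r ≤ prev α hα f} (δ + 1) (f δ)).1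

noncomputable def nodeP (S : Setup l P) : Ordinal.{u} → (Ordinal.{u} → Ordinal.{u}) → P :=
  Ordinal.lt_wf.fix (nodePStep S)

/-- The set of lower bounds of the branch through `f` of length `δ`. -/
def Lset (S : Setup l P) (δ : Ordinal.{u}) (f : Ordinal.{u} → Ordinal.{u}) : Set P :=
  {r : P | ∀ α : Ordinal.{u}, ∀ hα : α < δ, r ≤ nodeP S α f}

theorem nodeP_eq (S : Setup l P) (δ : Ordinal.{u}) (f : Ordinal.{u} → Ordinal.{u}) :
    nodeP S δ f = (cfam S (Lset S δ f) (δ + 1) (f δ)).1 := by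
  have h : nodeP S δ = nodePStep S δ fun α _ => nodeP S α :=
    WellFounded.fix_eq _ _ _
  rw [h]
  rfl

theorem Lset_down (S : Setup l P) (δ : Ordinal.{u}) (f : Ordinal.{u} → Ordinal.{u}) :
    ∀ x ∈ Lset S δ f, ∀ y : P, y ≤ x → y ∈ Lset S δ f :=
  fun _ hx y hy α hα => hy.trans (hx α hα)

theorem nodeP_congr (S : Setup l P) : ∀ δ : Ordinal.{u}, ∀ f g : Ordinal.{u} → Ordinal.{u},
    (∀ α : Ordinal.{u}, α ≤ δ → f α = g α) → nodeP S δ f = nodeP S δ g := by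
  intro δ
  induction δ using Ordinal.induction with
  | h δ IH =>
    intro f g h
    have h1 : Lset S δ f = Lset S δ g := by
      have h2 : ∀ α : Ordinal.{u}, α < δ → nodeP S α f = nodeP S α g :=
        fun α hα => IH α hα f g fun α' hα' => h α' (hα'.trans hα.le)
      ext r
      constructor
      · intro hr α hα; rw [← h2 α hα]; exact hr α hα
      · intro hr α hα; rw [h2 α hα]; exact hr α hα
    rw [nodeP_eq, nodeP_eq, h1, h δ le_rfl]

theorem nodeP_props (S : Setup l P) : ∀ δ : Ordinal.{u}, δ < l.ord →
    ∀ f : Ordinal.{u} → Ordinal.{u},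
    ((∀ α, α < δ → f α < l.ord) → (Lset S δ f).Nonempty) ∧
    ((∀ α, α ≤ δ → f α < l.ord) → nodeP S δ f ∈ Lset S δ f) := by
  intro δ
  induction δ using Ordinal.induction with
  | h δ IH =>
    intro hδ f
    have hne : (∀ α, α < δ → f α < l.ord) → (Lset S δ f).Nonempty := by
      intro hf
      rcases Ordinal.zero_or_succ_or_isSuccLimit δ with h0 | ⟨a, ha⟩ | hlim
      · subst h0
        exact ⟨S.dflt, fun α hα => absurd hα (not_lt_of_ge (zero_le (a := α)))⟩
      · subst ha
        have haδ : a < Order.succ a := Order.lt_succ a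
        have hmem := (IH a haδ (haδ.trans hδ) f).2
          (fun α hα => hf α (lt_of_le_of_lt (Order.lt_succ_iff.mp (Order.lt_succ_iff.mpr hα))
            haδ))
        refine ⟨nodeP S a f, fun α hα => ?_⟩
        rcases (Order.lt_succ_iff.mp hα).lt_or_eq with h | h
        · exact hmem α h
        · subst h; exact le_rfl
      · obtain ⟨b, hb⟩ := S.closed δ hδ (fun α => nodeP S α f) (fun x y hxy hy => by
          rcases hxy.lt_or_eq with h | h
          · exact (IH y hy (hy.trans hδ) f).2
              (fun α hα => hf α (lt_of_le_of_lt hα hy)) x h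
          · subst h; exact le_rfl)
        exact ⟨b, fun α hα => hb α hα⟩
    refine ⟨hne, fun hf => ?_⟩
    rw [nodeP_eq]
    have hpδ : δ + 1 < l.ord := succ_lt_lim hδ S.lim
    exact (cfam_inv S (Lset S δ f) (Lset_down S δ f)
      (hne fun α hα => hf α hα.le) hpδ (f δ) (hf δ le_rfl)).1

theorem nodeP_le (S : Setup l P) {δ : Ordinal.{u}} (hδ : δ < l.ord)
    {f : Ordinal.{u} → Ordinal.{u}} (hf : ∀ α, α ≤ δ → f α < l.ord)
    {α : Ordinal.{u}} (hα : α ≤ δ) : nodeP S δ f ≤ nodeP S α f := by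
  rcases hα.lt_or_eq with h | h
  · exact (nodeP_props S δ hδ f).2 hf α h
  · subst h; exact le_rfl

theorem nodeP_incomp (S : Setup l P) {δ : Ordinal.{u}} (hδ : δ < l.ord)
    {f g : Ordinal.{u} → Ordinal.{u}}
    (hf : ∀ α, α ≤ δ → f α < l.ord) (hg : ∀ α, α ≤ δ → g α < l.ord)
    (hagree : ∀ α, α < δ → f α = g α) (hne : f δ ≠ g δ) :
    ¬ Compat (nodeP S δ f) (nodeP S δ g) := by
  have h1 : Lset S δ f = Lset S δ g := by
    have h2 : ∀ α : Ordinal.{u}, α < δ → nodeP S α f = nodeP S α g :=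
      fun α hα => nodeP_congr S α f g fun α' hα' => hagree α' (lt_of_le_of_lt hα' hα)
    ext r
    constructor
    · intro hr α hα; rw [← h2 α hα]; exact hr α hα
    · intro hr α hα; rw [h2 α hα]; exact hr α hα
  rw [nodeP_eq, nodeP_eq, h1]
  have hpδ : δ + 1 < l.ord := succ_lt_lim hδ S.lim
  have hnemp : (Lset S δ g).Nonempty := (nodeP_props S δ hδ g).1 fun α hα => hg α hα.le
  rcases hne.lt_or_gt with h | h
  · intro hcc
    exact (cfam_inv S (Lset S δ g) (Lset_down S δ g) hnemp hpδ (g δ)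
      (hg δ le_rfl)).2.2.2.1 (f δ) h hcc.symm
  · exact (cfam_inv S (Lset S δ g) (Lset_down S δ g) hnemp hpδ (f δ)
      (hf δ le_rfl)).2.2.2.1 (g δ) h

theorem nodeP_max (S : Setup l P) {δ : Ordinal.{u}} (hδ : δ < l.ord)
    {f : Ordinal.{u} → Ordinal.{u}} (hf : ∀ α, α < δ → f α < l.ord)
    {r : P} (hr : r ∈ Lset S δ f) :
    ∃ β : Ordinal.{u}, β < l.ord ∧ Compat r (nodeP S δ (Function.update f δ β)) := by
  obtain ⟨β₀, hβ₀, henum⟩ := S.enum_surj r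
  have hpδ : δ + 1 < l.ord := succ_lt_lim hδ S.lim
  have hnemp : (Lset S δ f).Nonempty := (nodeP_props S δ hδ f).1 hf
  have hinv := (cfam_inv S (Lset S δ f) (Lset_down S δ f) hnemp hpδ β₀ hβ₀).2.2.2.2.2.1
  obtain ⟨η, hηβ, hcomp⟩ := hinv (by rw [henum]; exact hr)
  refine ⟨η, lt_of_le_of_lt hηβ hβ₀, ?_⟩
  have heq : nodeP S δ (Function.update f δ η) = (cfam S (Lset S δ f) (δ + 1) η).1 := by
    rw [nodeP_eq]
    have h1 : Lset S δ (Function.update f δ η) = Lset S δ f := by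
      have h2 : ∀ α : Ordinal.{u}, α < δ →
          nodeP S α (Function.update f δ η) = nodeP S α f :=
        fun α hα => nodeP_congr S α _ f fun α' hα' =>
          Function.update_of_ne (ne_of_lt (lt_of_le_of_lt hα' hα)) _ _
      ext x
      constructor
      · intro hx α hα; rw [← h2 α hα]; exact hx α hα
      · intro hx α hα; rw [h2 α hα]; exact hx α hα
    rw [h1, Function.update_self]
  rw [heq, ← henum]
  exact hcomp

theorem nodeP_dec (S : Setup l P) {δ : Ordinal.{u}} (hδ : δ < l.ord)
    {f : Ordinal.{u} → Ordinal.{u}} (hf : ∀ α, α ≤ δ → f α < l.ord)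
    {ξ : Ordinal.{u}} (hξ : ξ ≤ δ) :
    nodeP S δ f ≤ S.enum ξ ∨ ¬ Compat (nodeP S δ f) (S.enum ξ) := by
  rw [nodeP_eq]
  have hpδ : δ + 1 < l.ord := succ_lt_lim hδ S.lim
  have hnemp : (Lset S δ f).Nonempty := (nodeP_props S δ hδ f).1 fun α hα => hf α hα.le
  exact (cfam_inv S (Lset S δ f) (Lset_down S δ f) hnemp hpδ (f δ)
    (hf δ le_rfl)).2.2.2.2.2.2 ξ (lt_add_one_iff'.mpr hξ)

/-! ### The density walk -/

noncomputable def pickR (S : Setup l P) (q : P) (δ : Ordinal.{u})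
    (prev : ∀ η : Ordinal.{u}, η < δ → P × Ordinal.{u}) : P :=
  dchoice q fun r : P => r ≤ q ∧ (∀ η : Ordinal.{u}, ∀ hη : η < δ, r ≤ (prev η hη).1) ∧
    ∀ η : Ordinal.{u}, ∀ hη : η < δ,
      r ≤ nodeP S η fun α => if hα : α < δ then (prev α hα).2 else 0

open Classical in
noncomputable def pickB (S : Setup l P) (q : P) (δ : Ordinal.{u})
    (prev : ∀ η : Ordinal.{u}, η < δ → P × Ordinal.{u}) : Ordinal.{u} :=
  dchoice 0 fun β : Ordinal.{u} => β < l.ord ∧ Compat (pickR S q δ prev)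
    (nodeP S δ (Function.update (fun α => if hα : α < δ then (prev α hα).2 else 0) δ β))

noncomputable def walkStep (S : Setup l P) (q : P) (δ : Ordinal.{u})
    (prev : ∀ η : Ordinal.{u}, η < δ → P × Ordinal.{u}) : P × Ordinal.{u} :=
  (pickR S q δ prev, pickB S q δ prev)

noncomputable def walk (S : Setup l P) (q : P) : Ordinal.{u} → P × Ordinal.{u} :=
  Ordinal.lt_wf.fix (walkStep S q)

theorem walk_eq (S : Setup l P) (q : P) (δ : Ordinal.{u}) :
    walk S q δ = walkStep S q δ fun η _ => walk S q η :=
  WellFounded.fix_eq _ _ _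

/-- The branch produced by the walk. -/
noncomputable def wB (S : Setup l P) (q : P) : Ordinal.{u} → Ordinal.{u} :=
  fun δ => (walk S q δ).2

theorem wB_congr (S : Setup l P) (q : P) {δ η : Ordinal.{u}} (hη : η < δ) :
    nodeP S η (fun α => if hα : α < δ then (walk S q α).2 else 0) = nodeP S η (wB S q) :=
  nodeP_congr S η _ _ fun α hα => by rw [dif_pos (lt_of_le_of_lt hα hη)]; rfl

theorem walk_inv (S : Setup l P) (q : P) : ∀ δ : Ordinal.{u}, δ < l.ord →
    ((walk S q δ).1 ≤ q ∧ (∀ η, η < δ → (walk S q δ).1 ≤ (walk S q η).1) ∧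
      (∀ η, η < δ → (walk S q δ).1 ≤ nodeP S η (wB S q))) ∧
    ((walk S q δ).2 < l.ord ∧ Compat (walk S q δ).1 (nodeP S δ (wB S q))) := by
  intro δ
  induction δ using Ordinal.induction with
  | h δ IH =>
    intro hδ
    have hgood : ∀ η : Ordinal.{u}, η < δ → ∀ α, α ≤ η → wB S q α < l.ord :=
      fun η hη α hα => (IH α (lt_of_le_of_lt hα hη) ((lt_of_le_of_lt hα hη).trans hδ)).2.1
    have hexR : ∃ r : P, r ≤ q ∧ (∀ η : Ordinal.{u}, ∀ _ : η < δ, r ≤ (walk S q η).1) ∧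
        ∀ η : Ordinal.{u}, ∀ _ : η < δ,
          r ≤ nodeP S η fun α => if _ : α < δ then (walk S q α).2 else 0 := by
      rcases Ordinal.zero_or_succ_or_isSuccLimit δ with h0 | ⟨a, ha⟩ | hlim
      · subst h0
        exact ⟨q, le_rfl, fun η hη => absurd hη (not_lt_of_ge (zero_le (a := η))),
          fun η hη => absurd hη (not_lt_of_ge (zero_le (a := η)))⟩
      · subst ha
        have haδ : a < Order.succ a := Order.lt_succ a
        have ha' := IH a haδ (haδ.trans hδ)
        obtain ⟨w, hw1, hw2⟩ := ha'.2.2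
        refine ⟨w, (hw1.trans ha'.1.1), fun η hη => ?_, fun η hη => ?_⟩
        · rcases (Order.lt_succ_iff.mp hη).lt_or_eq with h | h
          · exact hw1.trans (ha'.1.2.1 η h)
          · subst h; exact hw1
        · rw [wB_congr S q hη]
          rcases (Order.lt_succ_iff.mp hη).lt_or_eq with h | h
          · exact hw2.trans (nodeP_le S (haδ.trans hδ)
              (fun α hα => hgood a haδ α hα) h.le)
          · subst h; exact hw2
      · obtain ⟨b, hb⟩ := S.closed δ hδ (fun η => (walk S q η).1) (fun x y hxy hy => by
          rcases hxy.lt_or_eq with h | h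
          · exact (IH y hy (hy.trans hδ)).1.2.1 x h
          · subst h; exact le_rfl)
        refine ⟨b, (hb 0 hlim.pos).trans (IH 0 hlim.pos (hlim.pos.trans hδ)).1.1,
          fun η hη => hb η hη, fun η hη => ?_⟩
        rw [wB_congr S q hη]
        have hη1 : η + 1 < δ := by rw [Ordinal.add_one_eq_succ]; exact hlim.succ_lt hη
        obtain ⟨w, hw1, hw2⟩ := (IH (η + 1) hη1 (hη1.trans hδ)).2.2
        have := (IH (η + 1) hη1 (hη1.trans hδ)).1.2.2 η (lt_add_one_iff'.mpr le_rfl)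
        exact (hb (η + 1) hη1).trans this
    have hRspec := dchoice_spec (α := P) q hexR
    have hR1 : (walk S q δ).1 = dchoice q fun r : P => r ≤ q ∧
        (∀ η : Ordinal.{u}, ∀ _ : η < δ, r ≤ (walk S q η).1) ∧
        ∀ η : Ordinal.{u}, ∀ _ : η < δ,
          r ≤ nodeP S η fun α => if _ : α < δ then (walk S q α).2 else 0 := by
      rw [walk_eq]
      show pickR S q δ _ = _
      simp only [pickR]
    have hRq : (walk S q δ).1 ≤ q := by rw [hR1]; exact hRspec.1
    have hRmono : ∀ η, η < δ → (walk S q δ).1 ≤ (walk S q η).1 := by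
      intro η hη; rw [hR1]; exact hRspec.2.1 η hη
    have hRnode : ∀ η, η < δ → (walk S q δ).1 ≤ nodeP S η (wB S q) := by
      intro η hη
      rw [hR1, ← wB_congr S q hη]
      exact hRspec.2.2 η hη
    refine ⟨⟨hRq, hRmono, hRnode⟩, ?_⟩
    have hexB : ∃ β : Ordinal.{u}, β < l.ord ∧ Compat (walk S q δ).1
        (nodeP S δ (Function.update (fun α => if _ : α < δ then (walk S q α).2 else 0) δ β)) := by
      have hrL : (walk S q δ).1 ∈ Lset S δ (wB S q) := fun α hα => hRnode α hα
      obtain ⟨β, hβ, hcomp⟩ := nodeP_max S hδ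
        (fun α hα => (IH α hα (hα.trans hδ)).2.1) hrL
      refine ⟨β, hβ, ?_⟩
      have : nodeP S δ (Function.update (fun α => if _ : α < δ then (walk S q α).2 else 0) δ β)
          = nodeP S δ (Function.update (wB S q) δ β) := by
        apply nodeP_congr
        intro α hα
        rcases hα.lt_or_eq with h | h
        · rw [Function.update_of_ne (ne_of_lt h), Function.update_of_ne (ne_of_lt h),
            dif_pos h]
          rfl
        · subst h; rw [Function.update_self, Function.update_self]
      rw [this]
      exact hcomp
    have hB1 : (walk S q δ).2 = dchoice 0 fun β : Ordinal.{u} => β < l.ord ∧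
        Compat ((walk S q δ).1)
        (nodeP S δ (Function.update (fun α => if _ : α < δ then (walk S q α).2 else 0) δ β)) := by
      conv_lhs => rw [walk_eq]
      show pickB S q δ _ = _
      simp only [pickB, pickR]
      rw [← hR1]
    rw [hR1] at hexB
    have hBspec := dchoice_spec (α := Ordinal.{u}) 0 hexB
    rw [← hR1] at hBspec
    constructor
    · rw [hB1]; exact hBspec.1
    · have hcomp := hBspec.2
      rw [← hB1] at hcomp
      have : nodeP S δ (Function.update (fun α => if _ : α < δ then (walk S q α).2 else 0) δ
          ((walk S q δ).2)) = nodeP S δ (wB S q) := by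
        apply nodeP_congr
        intro α hα
        rcases hα.lt_or_eq with h | h
        · rw [Function.update_of_ne (ne_of_lt h), dif_pos h]; rfl
        · subst h; rw [Function.update_self]; rfl
      rw [this] at hcomp
      exact hcomp

theorem exists_node_le (S : Setup l P) (q : P) :
    ∃ (δ : Ordinal.{u}) (f : Ordinal.{u} → Ordinal.{u}), δ < l.ord ∧
      (∀ α, α ≤ δ → f α < l.ord) ∧ nodeP S δ f ≤ q := by
  obtain ⟨γ, hγ, henum⟩ := S.enum_surj q
  have hδ : γ + 1 < l.ord := succ_lt_lim hγ S.lim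
  have hgood : ∀ α, α ≤ γ + 1 → wB S q α < l.ord :=
    fun α hα => (walk_inv S q α (lt_of_le_of_lt hα hδ)).2.1
  refine ⟨γ + 1, wB S q, hδ, hgood, ?_⟩
  have hξ : γ ≤ γ + 1 := le_of_lt (lt_add_one_iff'.mpr le_rfl)
  rcases nodeP_dec S hδ hgood (ξ := γ) hξ with h | h
  · rw [henum] at h; exact h
  · exfalso
    obtain ⟨w, hw1, hw2⟩ := (walk_inv S q (γ + 1) hδ).2.2
    exact h ⟨w, hw2, by rw [henum]; exact hw1.trans (walk_inv S q (γ + 1) hδ).1.1⟩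

/-! ### Sequence lemmas -/

theorem seq_ext {o v : Ordinal.{u}} {s t : SeqLT o v} (h1 : s.len = t.len)
    (h2 : ∀ β, s.val β = t.val β) : s = t := by
  obtain ⟨sl, slt, sv, svl, svz⟩ := s
  obtain ⟨tl, tlt, tv, tvl, tvz⟩ := t
  dsimp at h1 h2
  subst h1
  have h3 : sv = tv := funext h2
  subst h3
  rfl

theorem seq_le_antisymm {o v : Ordinal.{u}} {s t : SeqLT o v} (h1 : SeqLT.le s t)
    (h2 : SeqLT.le t s) : s = t := by
  have hlen : s.len = t.len := le_antisymm h1.1 h2.1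
  apply seq_ext hlen
  intro β
  by_cases hβ : β < s.len
  · exact h1.2 β hβ
  · rw [s.val_zero β (not_lt.mp hβ), t.val_zero β (by rw [← hlen]; exact not_lt.mp hβ)]

theorem len_lt_ord (hl : Order.IsSuccLimit l.ord) (s : SeqLT l.ord l.ord) : s.len < l.ord := by
  have h := s.len_lt
  rwa [sup_eq_left.mpr (by simpa using hl.succ_lt hl.pos : (1 : Ordinal) < l.ord).le] at h

/-! ### The embedding of `Add*(λ,1)` -/

/-- The embedding of the successor-length sequences into `P`. -/
noncomputable def pi (S : Setup l P)
    (a : {s : SeqLT l.ord l.ord // ∃ β : Ordinal.{u}, s.len = β + 1}) : P :=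
  nodeP S a.2.choose a.1.val

theorem good_val {a : {s : SeqLT l.ord l.ord // ∃ β : Ordinal.{u}, s.len = β + 1}} :
    ∀ α, α ≤ a.2.choose → a.1.val α < l.ord :=
  fun α hα => a.1.val_lt α (by rw [a.2.choose_spec]; exact lt_add_one_iff'.mpr hα)

theorem pred_lt (hl : Order.IsSuccLimit l.ord)
    {a : {s : SeqLT l.ord l.ord // ∃ β : Ordinal.{u}, s.len = β + 1}} :
    a.2.choose < l.ord := by
  have h := len_lt_ord hl a.1
  rw [a.2.choose_spec] at h
  exact (lt_add_one_iff'.mpr le_rfl).trans h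

theorem pi_le_node (S : Setup l P)
    (a : {s : SeqLT l.ord l.ord // ∃ β : Ordinal.{u}, s.len = β + 1})
    {γ : Ordinal.{u}} (hγ : γ < a.1.len) : pi S a ≤ nodeP S γ a.1.val :=
  nodeP_le S (pred_lt S.lim) good_val
    (by rw [a.2.choose_spec] at hγ; exact lt_add_one_iff'.mp hγ)

theorem pi_mono (S : Setup l P)
    {a b : {s : SeqLT l.ord l.ord // ∃ β : Ordinal.{u}, s.len = β + 1}}
    (h : SeqLT.le b.1 a.1) : pi S a ≤ pi S b := by
  have hlen : b.1.len ≤ a.1.len := h.1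
  rw [b.2.choose_spec, a.2.choose_spec, Ordinal.add_one_eq_succ, Ordinal.add_one_eq_succ,
    Order.succ_le_succ_iff] at hlen
  have h1 : pi S a ≤ nodeP S b.2.choose a.1.val := nodeP_le S (pred_lt S.lim) good_val hlen
  have h2 : nodeP S b.2.choose a.1.val = nodeP S b.2.choose b.1.val :=
    nodeP_congr S _ _ _ fun α hα =>
      (h.2 α (by rw [b.2.choose_spec]; exact lt_add_one_iff'.mpr hα)).symm
  exact h1.trans_eq h2

theorem pi_agree (S : Setup l P)
    {a b : {s : SeqLT l.ord l.ord // ∃ β : Ordinal.{u}, s.len = β + 1}}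
    (h : pi S a ≤ pi S b) :
    ∀ γ, γ < a.1.len → γ < b.1.len → a.1.val γ = b.1.val γ := by
  intro γ
  induction γ using Ordinal.induction with
  | h γ IHγ =>
    intro hγa hγb
    by_contra hnev
    have hγl : γ < l.ord := hγa.trans (len_lt_ord S.lim a.1)
    have hinc := nodeP_incomp S hγl
      (fun α hα => a.1.val_lt α (lt_of_le_of_lt hα hγa))
      (fun α hα => b.1.val_lt α (lt_of_le_of_lt hα hγb))
      (fun α hα => IHγ α hα (hα.trans hγa) (hα.trans hγb)) hnev
    exact hinc ⟨pi S a, pi_le_node S a hγa, h.trans (pi_le_node S b hγb)⟩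

theorem pi_len (S : Setup l P)
    {a b : {s : SeqLT l.ord l.ord // ∃ β : Ordinal.{u}, s.len = β + 1}}
    (h : pi S a ≤ pi S b) : b.1.len ≤ a.1.len := by
  by_contra hlt
  push_neg at hlt
  have hμb : a.1.len < b.1.len := hlt
  have hμl : a.1.len < l.ord := hμb.trans (len_lt_ord S.lim b.1)
  classical
  set c' : Ordinal.{u} := if b.1.val a.1.len = 0 then 1 else 0 with hc'
  have hc'lt : c' < l.ord := by
    rw [hc']; split
    · simpa using S.lim.succ_lt S.lim.pos
    · exact S.lim.pos
  have hc'ne : c' ≠ b.1.val a.1.len := by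
    rw [hc']; split
    · next h0 => rw [h0]; exact one_ne_zero
    · next h0 => exact fun hh => h0 hh.symm
  have hgb : ∀ α, α ≤ a.1.len → b.1.val α < l.ord :=
    fun α hα => b.1.val_lt α (lt_of_le_of_lt hα hμb)
  have hgg : ∀ α, α ≤ a.1.len → Function.update b.1.val a.1.len c' α < l.ord := by
    intro α hα
    rcases hα.lt_or_eq with hh | hh
    · rw [Function.update_of_ne (ne_of_lt hh)]; exact hgb α hα
    · subst hh; rw [Function.update_self]; exact hc'lt
  have h1 : ¬ Compat (nodeP S a.1.len (Function.update b.1.val a.1.len c'))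
      (nodeP S a.1.len b.1.val) :=
    nodeP_incomp S hμl hgg hgb
      (fun α hα => Function.update_of_ne (ne_of_lt hα) _ _)
      (by rw [Function.update_self]; exact hc'ne)
  apply h1
  have hpa : a.2.choose < a.1.len :=
    lt_of_lt_of_le (lt_add_one_iff'.mpr le_rfl) (le_of_eq a.2.choose_spec.symm)
  have h2 : nodeP S a.1.len (Function.update b.1.val a.1.len c')
      ≤ nodeP S a.2.choose (Function.update b.1.val a.1.len c') :=
    nodeP_le S hμl hgg hpa.le
  have h3 : nodeP S a.2.choose (Function.update b.1.val a.1.len c')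
      = nodeP S a.2.choose a.1.val := by
    apply nodeP_congr
    intro α hα
    have hαμ : α < a.1.len := lt_of_le_of_lt hα hpa
    rw [Function.update_of_ne (ne_of_lt hαμ)]
    exact (pi_agree S h α hαμ (hαμ.trans hμb)).symm
  have hμpb : a.1.len ≤ b.2.choose := by
    have hh := hμb
    rw [b.2.choose_spec] at hh
    exact lt_add_one_iff'.mp hh
  have h4 : pi S b ≤ nodeP S a.1.len b.1.val := nodeP_le S (pred_lt S.lim) good_val hμpb
  exact ⟨nodeP S a.1.len (Function.update b.1.val a.1.len c'), le_rfl,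
    (h2.trans_eq h3).trans (h.trans h4)⟩

theorem pi_le_iff (S : Setup l P)
    {a b : {s : SeqLT l.ord l.ord // ∃ β : Ordinal.{u}, s.len = β + 1}} :
    pi S a ≤ pi S b ↔ SeqLT.le b.1 a.1 :=
  ⟨fun h => ⟨pi_len S h, fun β hβ =>
      (pi_agree S h β (lt_of_lt_of_le hβ (pi_len S h)) hβ).symm⟩,
    pi_mono S⟩

theorem pi_inj (S : Setup l P) : Function.Injective (pi S) := by
  intro a b hab
  have h1 := (pi_le_iff S).mp hab.le
  have h2 := (pi_le_iff S).mp hab.ge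
  exact Subtype.ext (seq_le_antisymm h2 h1)

theorem pi_dense (S : Setup l P) : DenseSub (Set.range (pi S)) := by
  intro p
  obtain ⟨δ, f, hδ, hf, hle⟩ := exists_node_le S p
  classical
  have hδ1 : δ + 1 < l.ord ⊔ 1 := lt_sup_iff.mpr (Or.inl (succ_lt_lim hδ S.lim))
  set s : SeqLT l.ord l.ord :=
    { len := δ + 1
      len_lt := hδ1
      val := fun α => if α < δ + 1 then f α else 0
      val_lt := fun β hβ => by
        show (if β < δ + 1 then f β else 0) < l.ord
        rw [if_pos hβ]; exact hf β (lt_add_one_iff'.mp hβ)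
      val_zero := fun β hβ => if_neg (not_lt.mpr hβ) } with hs
  have ha : ∃ β : Ordinal.{u}, s.len = β + 1 := ⟨δ, rfl⟩
  have hpred : ha.choose = δ := by
    have h2 : δ + 1 = ha.choose + 1 := ha.choose_spec
    rw [Ordinal.add_one_eq_succ, Ordinal.add_one_eq_succ] at h2
    exact (Order.succ_injective h2).symm
  refine ⟨pi S ⟨s, ha⟩, ⟨⟨s, ha⟩, rfl⟩, ?_⟩
  have he1 : pi S ⟨s, ha⟩ = nodeP S δ s.val := by
    show nodeP S ha.choose s.val = _
    rw [hpred]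
  have he2 : nodeP S δ s.val = nodeP S δ f :=
    nodeP_congr S δ _ _ fun α hα => if_pos (lt_add_one_iff'.mpr hα)
  rw [he1, he2]
  exact hle

theorem addStar_dense (hl : Order.IsSuccLimit l.ord) : DenseSub (Set.range
    (Subtype.val : {s : SeqLT l.ord l.ord // ∃ β : Ordinal.{u}, s.len = β + 1}
      → SeqLT l.ord l.ord)) := by
  intro t
  have hcond : t.len + 1 < l.ord ⊔ 1 ∧ (0 : Ordinal.{u}) < l.ord :=
    ⟨lt_sup_iff.mpr (Or.inl (succ_lt_lim (len_lt_ord hl t) hl)), hl.pos⟩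
  have hlen : (t.snoc 0).len = t.len + 1 := by rw [SeqLT.snoc, dif_pos hcond]
  have hle : (t.snoc 0) ≤ t := by
    show SeqLT.le t (t.snoc 0)
    rw [SeqLT.snoc, dif_pos hcond]
    exact ⟨le_of_lt (lt_add_one_iff'.mpr le_rfl),
      fun β hβ => (if_neg (ne_of_lt hβ)).symm⟩
  exact ⟨t.snoc 0, ⟨⟨t.snoc 0, ⟨t.len, hlen⟩⟩, rfl⟩, hle⟩

/-! ### The master theorem -/

theorem master (S : Setup l P) :
    (∃ D : Set P, DenseSub D ∧
      ∃ e : D ≃ {s : SeqLT l.ord l.ord // ∃ β : Ordinal.{u}, s.len = β + 1},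
        ∀ x y : D, x ≤ y ↔ e x ≤ e y) ∧
    SubEquiv P (SeqLT l.ord l.ord) := by
  constructor
  · refine ⟨Set.range (pi S), pi_dense S, ?_⟩
    have hbij : Function.Bijective
        (fun a : {s : SeqLT l.ord l.ord // ∃ β : Ordinal.{u}, s.len = β + 1} =>
          (⟨pi S a, Set.mem_range_self a⟩ : Set.range (pi S))) := by
      constructor
      · intro a b hab
        exact pi_inj S (congrArg Subtype.val hab)
      · rintro ⟨p, a, rfl⟩
        exact ⟨a, rfl⟩
    refine ⟨(Equiv.ofBijective _ hbij).symm, fun x y => ?_⟩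
    have hx : pi S ((Equiv.ofBijective _ hbij).symm x) = x.1 :=
      congrArg Subtype.val ((Equiv.ofBijective _ hbij).apply_symm_apply x)
    have hy : pi S ((Equiv.ofBijective _ hbij).symm y) = y.1 :=
      congrArg Subtype.val ((Equiv.ofBijective _ hbij).apply_symm_apply y)
    have hgoal : x.1 ≤ y.1 ↔ (Equiv.ofBijective _ hbij).symm x ≤
        (Equiv.ofBijective _ hbij).symm y := by
      rw [← hx, ← hy, pi_le_iff]
      exact Iff.rfl
    exact hgoal
  · refine ⟨{s : SeqLT l.ord l.ord // ∃ β : Ordinal.{u}, s.len = β + 1}, inferInstance,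
      pi S, Subtype.val, ⟨pi_inj S, fun a b => ?_, pi_dense S⟩,
      ⟨Subtype.val_injective, fun a b => Iff.rfl, addStar_dense S.lim⟩⟩
    exact (pi_le_iff S).symm

end S3

/-- Let `λ` be an uncountable regular cardinal with `λ^{<λ} = λ` and let `P` be a non-atomic
`<λ`-closed forcing of cardinality `λ`. Then `P` has a dense subset order-isomorphic to
`Add*(λ,1)` (the conditions of `Add(λ,1)` with domain a successor ordinal), and in particular
`P` is sub-equivalent to `Add(λ,1)`. -/
theorem statement3 (l : Cardinal.{u}) (hreg : l.IsRegular) (hunc : Cardinal.aleph0 < l)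
    (hpow : Cardinal.powerlt l l = l)
    (P : Type (u + 1)) [Preorder P]
    (hcard : Cardinal.mk P = Cardinal.lift.{u + 1} l)
    (hatomless : ∀ p : P, ∃ q r : P, q ≤ p ∧ r ≤ p ∧ ¬∃ w : P, w ≤ q ∧ w ≤ r)
    (hclosed : ∀ γ : Ordinal.{u}, γ < l.ord → ∀ f : Ordinal.{u} → P,
      (∀ α β : Ordinal.{u}, α ≤ β → β < γ → f β ≤ f α) →
        ∃ b : P, ∀ α, α < γ → b ≤ f α) :
    (∃ D : Set P, DenseSub D ∧
      ∃ e : D ≃ {s : SeqLT l.ord l.ord // ∃ β : Ordinal.{u}, s.len = β + 1},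
        ∀ x y : D, x ≤ y ↔ e x ≤ e y) ∧
    SubEquiv P (SeqLT l.ord l.ord) := by
  classical
  have hlim : Order.IsSuccLimit l.ord := Cardinal.isSuccLimit_ord hunc.le
  have hPne : Nonempty P := by
    rw [← Cardinal.mk_ne_zero_iff]
    rw [hcard]
    simp only [ne_eq, Cardinal.lift_eq_zero]
    exact (Cardinal.aleph0_pos.trans hunc).ne'
  obtain ⟨p₀⟩ := hPne
  have hmk : Cardinal.mk (Set.Iio l.ord) = Cardinal.mk P := by
    rw [Ordinal.mk_Iio_ordinal, Cardinal.card_ord, hcard]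
  obtain ⟨eqv⟩ := Cardinal.eq.mp hmk
  choose q1 q2 hq1 hq2 hqi using hatomless
  exact S3.master
    { dflt := p₀
      enum := fun β => if h : β < l.ord then eqv ⟨β, h⟩ else p₀
      enum_surj := by
        intro p
        obtain ⟨x, hx⟩ := eqv.surjective p
        exact ⟨x.1, Set.mem_Iio.mp x.2, by
          rw [dif_pos (Set.mem_Iio.mp x.2)]
          exact hx⟩
      closed := hclosed
      spl := fun p => (q1 p, q2 p)
      spl1_le := hq1
      spl2_le := hq2
      spl_inc := fun p hc => hqi p hc
      lim := hlim }

end
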